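/- For every integer n ≥ 2, the sum over all permutations σ of [n] of (-1) raised to the number of inversions of σ of distance at most 2 equals 0. Equivalently, the number of permutations of [n] with an even number of such inversions equals the number with an odd number. (Hence this statistic exhibits the cyclic sieving phenomenon with respect to fixed-point-free involutions on S_n.) -/

import Mathlib

open Finset

lemma cardD (n : ℕ) (hn : 2 ≤ n) :
    (univ.filter (fun p : Fin n × Fin n =>
      p.1 < p.2 ∧ (p.2 : ℕ) ≤ (p.1 : ℕ) + 2)).card = 2 * n - 3 := by
  rw [← Finset.card_range (2 * n - 3)]
  refine Finset.card_bij' (fun p _ => 2 * (p.1 : ℕ) + ((p.2 : ℕ) - (p.1 : ℕ) - 1))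
    (fun k hk => (⟨k / 2, by simp only [mem_range] at hk; omega⟩,
      ⟨k / 2 + 1 + k % 2, by simp only [mem_range] at hk; omega⟩)) ?_ ?_ ?_ ?_
  · intro p hp
    simp only [mem_filter, mem_univ, true_and, Fin.lt_def] at hp
    have h2 := p.2.isLt
    simp only [mem_range]
    omega
  · intro k hk
    simp only [mem_range] at hk
    refine mem_filter.mpr ⟨mem_univ _, Fin.mk_lt_mk.mpr (by omega), ?_⟩
    show k / 2 + 1 + k % 2 ≤ k / 2 + 2
    omega
  · intro p hp
    simp only [mem_filter, mem_univ, true_and, Fin.lt_def] at hp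
    have h2 := p.2.isLt
    ext <;> simp <;> omega
  · intro k hk
    simp only [mem_range] at hk
    simp only []
    omega

lemma key (n : ℕ) (σ : Equiv.Perm (Fin n)) :
    (univ.filter (fun p : Fin n × Fin n =>
      p.1 < p.2 ∧ (p.2 : ℕ) ≤ (p.1 : ℕ) + 2 ∧ σ p.2.rev < σ p.1.rev)).card
    + (univ.filter (fun p : Fin n × Fin n =>
      p.1 < p.2 ∧ (p.2 : ℕ) ≤ (p.1 : ℕ) + 2 ∧ σ p.2 < σ p.1)).card
    = (univ.filter (fun p : Fin n × Fin n =>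
      p.1 < p.2 ∧ (p.2 : ℕ) ≤ (p.1 : ℕ) + 2)).card := by
  classical
  have h1 : (univ.filter (fun p : Fin n × Fin n =>
      p.1 < p.2 ∧ (p.2 : ℕ) ≤ (p.1 : ℕ) + 2 ∧ σ p.2.rev < σ p.1.rev)).card
      = (univ.filter (fun p : Fin n × Fin n =>
      p.1 < p.2 ∧ (p.2 : ℕ) ≤ (p.1 : ℕ) + 2 ∧ ¬ σ p.2 < σ p.1)).card := by
    refine Finset.card_nbij' (fun p => (p.2.rev, p.1.rev)) (fun p => (p.2.rev, p.1.rev))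
      ?_ ?_ ?_ ?_
    · intro p hp
      simp only [mem_coe, mem_filter, mem_univ, true_and, Fin.lt_def] at hp ⊢
      obtain ⟨h1, h2, h3⟩ := hp
      have := p.1.isLt; have := p.2.isLt
      refine ⟨by simp [Fin.val_rev]; omega, by simp [Fin.val_rev]; omega, ?_⟩
      exact lt_asymm h3
    · intro p hp
      simp only [mem_coe, mem_filter, mem_univ, true_and, Fin.lt_def] at hp ⊢
      obtain ⟨h1, h2, h3⟩ := hp
      have := p.1.isLt; have := p.2.isLt
      refine ⟨by simp [Fin.val_rev]; omega, by simp [Fin.val_rev]; omega, ?_⟩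
      simp only [Fin.rev_rev]
      have hne : ((σ p.1 : Fin n) : ℕ) ≠ ((σ p.2 : Fin n) : ℕ) := fun h => by
        have := σ.injective (Fin.val_injective h); omega
      omega
    · intro p hp; ext <;> simp [Fin.rev_rev]
    · intro p hp; ext <;> simp [Fin.rev_rev]
  rw [h1]
  have h2 : ∀ (q : Fin n × Fin n → Prop) [DecidablePred q],
      univ.filter (fun p : Fin n × Fin n =>
        p.1 < p.2 ∧ (p.2 : ℕ) ≤ (p.1 : ℕ) + 2 ∧ q p)
      = (univ.filter (fun p : Fin n × Fin n =>
        p.1 < p.2 ∧ (p.2 : ℕ) ≤ (p.1 : ℕ) + 2)).filter q := by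
    intro q _
    rw [Finset.filter_filter]
    apply Finset.filter_congr
    intro p _
    simp [and_assoc]
  rw [h2, h2, Nat.add_comm]
  exact Finset.card_filter_add_card_filter_not _

theorem inversions_distance_two_q_eq_neg_one (n : ℕ) (hn : 2 ≤ n) :
    ∑ σ : Equiv.Perm (Fin n),
      (-1 : ℤ) ^ (univ.filter (fun p : Fin n × Fin n =>
        p.1 < p.2 ∧ (p.2 : ℕ) ≤ (p.1 : ℕ) + 2 ∧ σ p.2 < σ p.1)).card
      = 0 := by
  classical
  set f : Equiv.Perm (Fin n) → ℤ := fun σ =>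
    (-1 : ℤ) ^ (univ.filter (fun p : Fin n × Fin n =>
      p.1 < p.2 ∧ (p.2 : ℕ) ≤ (p.1 : ℕ) + 2 ∧ σ p.2 < σ p.1)).card with hf
  have hre : ∑ σ : Equiv.Perm (Fin n), f σ
      = ∑ σ : Equiv.Perm (Fin n), f (σ * Fin.revPerm) :=
    (Equiv.sum_comp (Equiv.mulRight Fin.revPerm) f).symm
  have hneg : ∀ σ : Equiv.Perm (Fin n), f (σ * Fin.revPerm) = - f σ := by
    intro σ
    have hk := key n σ
    rw [cardD n hn] at hk
    have hcond : ∀ p : Fin n × Fin n,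
        ((σ * Fin.revPerm : Equiv.Perm (Fin n)) p.2 < (σ * Fin.revPerm : Equiv.Perm (Fin n)) p.1) ↔ (σ p.2.rev < σ p.1.rev) := by
      intro p; simp [Equiv.Perm.mul_apply]
    have hA : (univ.filter (fun p : Fin n × Fin n =>
        p.1 < p.2 ∧ (p.2 : ℕ) ≤ (p.1 : ℕ) + 2 ∧ (σ * Fin.revPerm : Equiv.Perm (Fin n)) p.2 < (σ * Fin.revPerm : Equiv.Perm (Fin n)) p.1)).card
        = (univ.filter (fun p : Fin n × Fin n =>
        p.1 < p.2 ∧ (p.2 : ℕ) ≤ (p.1 : ℕ) + 2 ∧ σ p.2.rev < σ p.1.rev)).card := by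
      refine congrArg Finset.card ?_
      ext p
      simp only [mem_filter, mem_univ, true_and, hcond p]
    set a := (univ.filter (fun p : Fin n × Fin n =>
        p.1 < p.2 ∧ (p.2 : ℕ) ≤ (p.1 : ℕ) + 2 ∧ σ p.2.rev < σ p.1.rev)).card
    set b := (univ.filter (fun p : Fin n × Fin n =>
        p.1 < p.2 ∧ (p.2 : ℕ) ≤ (p.1 : ℕ) + 2 ∧ σ p.2 < σ p.1)).card
    have hodd : Odd (a + b) := by rw [hk]; exact ⟨n - 2, by omega⟩
    have hmul : (-1 : ℤ) ^ a * (-1) ^ b = -1 := by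
      rw [← pow_add]; exact Odd.neg_one_pow hodd
    have hb : (-1 : ℤ) ^ b * (-1) ^ b = 1 := by
      rw [← pow_add]; exact Even.neg_one_pow ⟨b, by omega⟩
    show (-1 : ℤ) ^ (univ.filter (fun p : Fin n × Fin n =>
        p.1 < p.2 ∧ (p.2 : ℕ) ≤ (p.1 : ℕ) + 2 ∧ (σ * Fin.revPerm : Equiv.Perm (Fin n)) p.2 < (σ * Fin.revPerm : Equiv.Perm (Fin n)) p.1)).card = -((-1 : ℤ) ^ b)
    rw [hA]
    linear_combination ((-1 : ℤ) ^ b) * hmul - ((-1 : ℤ) ^ a) * hb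
  have hS : ∑ σ : Equiv.Perm (Fin n), f σ = - ∑ σ : Equiv.Perm (Fin n), f σ := by
    calc ∑ σ : Equiv.Perm (Fin n), f σ
        = ∑ σ : Equiv.Perm (Fin n), f (σ * Fin.revPerm) := hre
      _ = ∑ σ : Equiv.Perm (Fin n), - f σ := Finset.sum_congr rfl fun σ _ => hneg σ
      _ = - ∑ σ : Equiv.Perm (Fin n), f σ := by rw [Finset.sum_neg_distrib]
  linarith
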